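/- Let E be a measurable space with Markov kernel P, and let m be a σ-finite measure on E with mP ≪ m. Then the map T sending the Radon–Nikodym derivative dκ/dm of a finite signed measure κ ≪ m to d(κP)/dm is a well-defined linear contraction on L¹(m), and its adjoint on L^∞(m) is the averaging operator f ↦ (x ↦ ∫_E f(y) dP_x(y)). -/

import Mathlib

open MeasureTheory Filter ProbabilityTheory
open scoped ENNReal NNReal

noncomputable section Stmt19Aux

variable {E : Type*} [MeasurableSpace E] (P : Kernel E E) [IsMarkovKernel P]
  (m : Measure E) [SigmaFinite m]

def muf (φ : E → ℝ≥0∞) : Measure E := (m.withDensity φ).bind ⇑P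

def Sf (φ : E → ℝ≥0∞) : E → ℝ≥0∞ := (muf P m φ).rnDeriv m

lemma muf_apply {φ : E → ℝ≥0∞} (hφ : AEMeasurable φ m) {A : Set E} (hA : MeasurableSet A) :
    muf P m φ A = ∫⁻ x, φ x * P x A ∂m := by
  rw [muf, Measure.bind_apply hA P.measurable.aemeasurable,
    lintegral_withDensity_eq_lintegral_mul₀ hφ (P.measurable_coe hA).aemeasurable]
  rfl

lemma muf_univ {φ : E → ℝ≥0∞} (hφ : AEMeasurable φ m) :
    muf P m φ Set.univ = ∫⁻ x, φ x ∂m := by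
  rw [muf_apply P m hφ MeasurableSet.univ]
  simp

lemma muf_fin {φ : E → ℝ≥0∞} (hφ : AEMeasurable φ m) (hfin : ∫⁻ x, φ x ∂m ≠ ∞) :
    IsFiniteMeasure (muf P m φ) :=
  ⟨by rw [muf_univ P m hφ]; exact hfin.lt_top⟩

lemma muf_ac (habs : m.bind (⇑P) ≪ m) {φ : E → ℝ≥0∞} (hφ : AEMeasurable φ m) :
    muf P m φ ≪ m := by
  refine Measure.AbsolutelyContinuous.mk fun A hA hA0 => ?_
  have h1 : m.bind (⇑P) A = 0 := habs hA0
  rw [Measure.bind_apply hA P.measurable.aemeasurable] at h1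
  have h2 : ∀ᵐ x ∂m, P x A = 0 := (lintegral_eq_zero_iff (P.measurable_coe hA)).mp h1
  rw [muf_apply P m hφ hA]
  rw [lintegral_eq_zero_iff' (f := fun x => φ x * P x A) (hφ.mul (P.measurable_coe hA).aemeasurable)]
  filter_upwards [h2] with x hx
  simp [hx]

lemma Sf_meas (φ : E → ℝ≥0∞) : Measurable (Sf P m φ) := Measure.measurable_rnDeriv _ _

lemma Sf_lintegral (habs : m.bind (⇑P) ≪ m) {φ : E → ℝ≥0∞} (hφ : AEMeasurable φ m)
    (hfin : ∫⁻ x, φ x ∂m ≠ ∞) {G : E → ℝ≥0∞} (hG : Measurable G) :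
    ∫⁻ x, Sf P m φ x * G x ∂m = ∫⁻ x, φ x * ∫⁻ y, G y ∂(P x) ∂m := by
  have hFin : IsFiniteMeasure (muf P m φ) := muf_fin P m hφ hfin
  have h1 : ∫⁻ x, Sf P m φ x * G x ∂m = ∫⁻ x, G x ∂(m.withDensity (Sf P m φ)) := by
    rw [lintegral_withDensity_eq_lintegral_mul₀ (Sf_meas P m φ).aemeasurable hG.aemeasurable]
    rfl
  rw [h1, Sf, Measure.withDensity_rnDeriv_eq _ _ (muf_ac P m habs hφ), muf,
    Measure.lintegral_bind P.measurable.aemeasurable hG.aemeasurable,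
    lintegral_withDensity_eq_lintegral_mul₀ hφ
      (g := fun x => ∫⁻ y, G y ∂(P x))
      ((Measure.measurable_lintegral hG).comp P.measurable).aemeasurable]
  rfl

lemma Sf_total (habs : m.bind (⇑P) ≪ m) {φ : E → ℝ≥0∞} (hφ : AEMeasurable φ m)
    (hfin : ∫⁻ x, φ x ∂m ≠ ∞) : ∫⁻ x, Sf P m φ x ∂m = ∫⁻ x, φ x ∂m := by
  have := Sf_lintegral P m habs hφ hfin measurable_one
  simpa using this

lemma Sf_lt_top {φ : E → ℝ≥0∞} (hφ : AEMeasurable φ m) (hfin : ∫⁻ x, φ x ∂m ≠ ∞) :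
    ∀ᵐ x ∂m, Sf P m φ x < ∞ := by
  have hFin : IsFiniteMeasure (muf P m φ) := muf_fin P m hφ hfin
  exact Measure.rnDeriv_lt_top _ _

lemma Sf_int {φ : E → ℝ≥0∞} (hφ : AEMeasurable φ m) (hfin : ∫⁻ x, φ x ∂m ≠ ∞) :
    Integrable (fun x => (Sf P m φ x).toReal) m := by
  have hFin : IsFiniteMeasure (muf P m φ) := muf_fin P m hφ hfin
  exact Measure.integrable_toReal_rnDeriv

lemma Sf_adj_nonneg (habs : m.bind (⇑P) ≪ m) {φ : E → ℝ≥0∞} (hφ : AEMeasurable φ m)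
    (hfin : ∫⁻ x, φ x ∂m ≠ ∞) {g : E → ℝ} (hg : Measurable g) (hg0 : ∀ y, 0 ≤ g y)
    {C : ℝ} (hC : ∀ y, g y ≤ C) :
    ∫ x, (Sf P m φ x).toReal * g x ∂m = ∫ x, (φ x).toReal * ∫ y, g y ∂(P x) ∂m := by
  set G : E → ℝ≥0∞ := fun y => ENNReal.ofReal (g y) with hGdef
  have hGm : Measurable G := hg.ennreal_ofReal
  have key := Sf_lintegral P m habs hφ hfin hGm
  have hSlt := Sf_lt_top P m hφ hfin
  have hφlt : ∀ᵐ x ∂m, φ x < ∞ := ae_lt_top' hφ hfin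
  have hGle : ∀ x, ∫⁻ y, G y ∂(P x) ≤ ENNReal.ofReal C := by
    intro x
    calc ∫⁻ y, G y ∂(P x) ≤ ∫⁻ _, ENNReal.ofReal C ∂(P x) :=
          lintegral_mono fun y => ENNReal.ofReal_le_ofReal (hC y)
      _ = ENNReal.ofReal C := by simp
  have l1 : ∫ x, (Sf P m φ x).toReal * g x ∂m = (∫⁻ x, Sf P m φ x * G x ∂m).toReal := by
    rw [← integral_toReal (f := fun x => Sf P m φ x * G x) ((Sf_meas P m φ).aemeasurable.mul hGm.aemeasurable) ?_]
    · refine integral_congr_ae ?_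
      filter_upwards [hSlt] with x hx
      rw [ENNReal.toReal_mul, ENNReal.toReal_ofReal (hg0 x)]
    · filter_upwards [hSlt] with x hx
      exact ENNReal.mul_lt_top hx ENNReal.ofReal_lt_top
  have r0 : ∀ x, ∫ y, g y ∂(P x) = (∫⁻ y, G y ∂(P x)).toReal := fun x => by
    rw [integral_eq_lintegral_of_nonneg_ae (Eventually.of_forall hg0) hg.aestronglyMeasurable]
  have r1 : ∫ x, (φ x).toReal * ∫ y, g y ∂(P x) ∂m
      = (∫⁻ x, φ x * ∫⁻ y, G y ∂(P x) ∂m).toReal := by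
    have hPGm : AEMeasurable (fun x => ∫⁻ y, G y ∂(P x)) m :=
      ((Measure.measurable_lintegral hGm).comp P.measurable).aemeasurable
    rw [← integral_toReal (f := fun x => φ x * ∫⁻ y, G y ∂(P x)) (hφ.mul hPGm) ?_]
    · refine integral_congr_ae ?_
      filter_upwards [hφlt] with x hx
      rw [ENNReal.toReal_mul, r0]
    · filter_upwards [hφlt] with x hx
      exact ENNReal.mul_lt_top hx ((hGle x).trans_lt ENNReal.ofReal_lt_top)
  rw [l1, r1, key]


lemma Sf_adj (habs : m.bind (⇑P) ≪ m) {φ : E → ℝ≥0∞} (hφ : AEMeasurable φ m)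
    (hfin : ∫⁻ x, φ x ∂m ≠ ∞) {g : E → ℝ} (hg : Measurable g)
    {C : ℝ} (hC : ∀ y, |g y| ≤ C) :
    ∫ x, (Sf P m φ x).toReal * g x ∂m = ∫ x, (φ x).toReal * ∫ y, g y ∂(P x) ∂m := by
  set gp : E → ℝ := fun y => max (g y) 0 with hgpdef
  set gm : E → ℝ := fun y => max (-g y) 0 with hgmdef
  have hgp : Measurable gp := hg.max measurable_const
  have hgm : Measurable gm := hg.neg.max measurable_const
  have hgp0 : ∀ y, 0 ≤ gp y := fun y => le_max_right _ _
  have hgm0 : ∀ y, 0 ≤ gm y := fun y => le_max_right _ _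
  have hgpC : ∀ y, gp y ≤ |C| := fun y =>
    max_le ((le_abs_self _).trans ((hC y).trans (le_abs_self C))) (abs_nonneg C)
  have hgmC : ∀ y, gm y ≤ |C| := fun y =>
    max_le ((neg_le_abs _).trans ((hC y).trans (le_abs_self C))) (abs_nonneg C)
  have hsub : ∀ y, gp y - gm y = g y := fun y => max_zero_sub_max_neg_zero_eq_self (g y)
  have hSint : Integrable (fun x => (Sf P m φ x).toReal) m := Sf_int P m hφ hfin
  have hφint : Integrable (fun x => (φ x).toReal) m :=
    integrable_toReal_of_lintegral_ne_top hφ hfin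
  -- integrability of S·h for bounded measurable h
  have hSmul : ∀ (h : E → ℝ), Measurable h → (∀ y, |h y| ≤ |C|) →
      Integrable (fun x => (Sf P m φ x).toReal * h x) m := by
    intro h hh hhC
    have := hSint.bdd_mul hh.aestronglyMeasurable
      (c := |C|) (Eventually.of_forall fun x => by simpa using hhC x)
    refine this.congr ?_
    filter_upwards with x using mul_comm _ _
  -- integrability of each P-average term
  have hPm : ∀ (h : E → ℝ), Measurable h → (∀ y, 0 ≤ h y) →
      Measurable (fun x => ∫ y, h y ∂(P x)) := by
    intro h hh hh0
    have : (fun x => ∫ y, h y ∂(P x))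
        = fun x => (∫⁻ y, ENNReal.ofReal (h y) ∂(P x)).toReal := by
      funext x
      rw [integral_eq_lintegral_of_nonneg_ae (Eventually.of_forall hh0)
        hh.aestronglyMeasurable]
    rw [this]
    exact ((Measure.measurable_lintegral hh.ennreal_ofReal).comp P.measurable).ennreal_toReal
  have hPint : ∀ (h : E → ℝ), Measurable h → (∀ y, 0 ≤ h y) → (∀ y, h y ≤ |C|) →
      Integrable (fun x => (φ x).toReal * ∫ y, h y ∂(P x)) m := by
    intro h hh hh0 hhC
    have hb : ∀ x, ‖∫ y, h y ∂(P x)‖ ≤ |C| := by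
      intro x
      have := norm_integral_le_of_norm_le_const (μ := P x) (C := |C|)
        (Eventually.of_forall fun y => by
          rw [Real.norm_eq_abs, abs_of_nonneg (hh0 y)]; exact hhC y) (f := h)
      simpa [measure_univ] using this
    have := hφint.bdd_mul (hPm h hh hh0).aestronglyMeasurable (c := |C|) (Eventually.of_forall hb)
    refine this.congr ?_
    filter_upwards with x using mul_comm _ _
  have hint_hp : ∀ x, Integrable gp (P x) := fun x =>
    ⟨hgp.aestronglyMeasurable, HasFiniteIntegral.of_bounded (C := |C|)
      (Eventually.of_forall fun y => by
        rw [Real.norm_eq_abs, abs_of_nonneg (hgp0 y)]; exact hgpC y)⟩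
  have hint_hm : ∀ x, Integrable gm (P x) := fun x =>
    ⟨hgm.aestronglyMeasurable, HasFiniteIntegral.of_bounded (C := |C|)
      (Eventually.of_forall fun y => by
        rw [Real.norm_eq_abs, abs_of_nonneg (hgm0 y)]; exact hgmC y)⟩
  have lhs : ∫ x, (Sf P m φ x).toReal * g x ∂m
      = ∫ x, (Sf P m φ x).toReal * gp x ∂m - ∫ x, (Sf P m φ x).toReal * gm x ∂m := by
    rw [← integral_sub (hSmul gp hgp fun y => by
        rw [abs_of_nonneg (hgp0 y)]; exact hgpC y)
      (hSmul gm hgm fun y => by rw [abs_of_nonneg (hgm0 y)]; exact hgmC y)]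
    refine integral_congr_ae ?_
    filter_upwards with x
    rw [← mul_sub, hsub]
  have rhs : ∫ x, (φ x).toReal * ∫ y, g y ∂(P x) ∂m
      = ∫ x, (φ x).toReal * ∫ y, gp y ∂(P x) ∂m
        - ∫ x, (φ x).toReal * ∫ y, gm y ∂(P x) ∂m := by
    rw [← integral_sub (hPint gp hgp hgp0 hgpC) (hPint gm hgm hgm0 hgmC)]
    refine integral_congr_ae ?_
    filter_upwards with x
    rw [← mul_sub, ← integral_sub (hint_hp x) (hint_hm x)]
    congr 1
    refine integral_congr_ae (Eventually.of_forall fun y => ?_)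
    exact (hsub y).symm
  rw [lhs, rhs,
    Sf_adj_nonneg P m habs hφ hfin hgp hgp0 hgpC,
    Sf_adj_nonneg P m habs hφ hfin hgm hgm0 hgmC]


def Tfun (f : E → ℝ) : E → ℝ := fun x =>
  (Sf P m (fun y => ENNReal.ofReal (f y)) x).toReal
  - (Sf P m (fun y => ENNReal.ofReal (-f y)) x).toReal

lemma Tfun_congr {f g : E → ℝ} (h : f =ᵐ[m] g) : Tfun P m f = Tfun P m g := by
  unfold Tfun Sf muf
  rw [withDensity_congr_ae (μ := m) (h.mono fun x hx => by rw [hx]),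
      withDensity_congr_ae (μ := m)
        ((h.mono fun x hx => by simp only []; rw [hx]) : (fun y => ENNReal.ofReal (-f y))
          =ᵐ[m] fun y => ENNReal.ofReal (-g y))]

lemma ofReal_lint_ne_top {f : E → ℝ} (hf : Integrable f m) :
    ∫⁻ x, ENNReal.ofReal (f x) ∂m ≠ ∞ := by
  have h : ∫⁻ x, ENNReal.ofReal (f x) ∂m ≤ ∫⁻ x, ‖f x‖₊ ∂m := by
    refine lintegral_mono fun x => ?_
    rw [← enorm_eq_nnnorm, ← ofReal_norm]
    exact ENNReal.ofReal_le_ofReal (le_abs_self _)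
  exact (h.trans_lt hf.2).ne

lemma parts_sub (r : ℝ) :
    (ENNReal.ofReal r).toReal - (ENNReal.ofReal (-r)).toReal = r := by
  simp only [ENNReal.toReal_ofReal']
  exact max_zero_sub_max_neg_zero_eq_self r

lemma parts_add (r : ℝ) :
    ENNReal.ofReal r + ENNReal.ofReal (-r) = ENNReal.ofReal |r| := by
  rcases le_total 0 r with h | h
  · rw [ENNReal.ofReal_of_nonpos (neg_nonpos.mpr h), abs_of_nonneg h, add_zero]
  · rw [ENNReal.ofReal_of_nonpos h, abs_of_nonpos h, zero_add]

lemma Tfun_int {f : E → ℝ} (hf : Integrable f m) : Integrable (Tfun P m f) m := by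
  exact (Sf_int P m hf.aemeasurable.ennreal_ofReal (ofReal_lint_ne_top m hf)).sub
    (Sf_int P m hf.neg.aemeasurable.ennreal_ofReal (ofReal_lint_ne_top m hf.neg))

lemma Tfun_adj (habs : m.bind (⇑P) ≪ m) {f : E → ℝ} (hf : Integrable f m)
    {g : E → ℝ} (hg : Measurable g) {C : ℝ} (hC : ∀ y, |g y| ≤ C) :
    ∫ x, Tfun P m f x * g x ∂m = ∫ x, f x * ∫ y, g y ∂(P x) ∂m := by
  set a : E → ℝ≥0∞ := fun y => ENNReal.ofReal (f y) with hadef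
  set c : E → ℝ≥0∞ := fun y => ENNReal.ofReal (-f y) with hcdef
  have ha : AEMeasurable a m := hf.aemeasurable.ennreal_ofReal
  have hc : AEMeasurable c m := hf.neg.aemeasurable.ennreal_ofReal
  have hafin := ofReal_lint_ne_top m hf
  have hcfin := ofReal_lint_ne_top m hf.neg
  have hCC : ∀ y, |g y| ≤ |C| := fun y => (hC y).trans (le_abs_self C)
  have hSa : Integrable (fun x => (Sf P m a x).toReal * g x) m := by
    have := (Sf_int P m ha hafin).bdd_mul hg.aestronglyMeasurable (c := |C|) (Eventually.of_forall fun y => hCC y)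
    exact this.congr (Eventually.of_forall fun x => mul_comm _ _)
  have hSc : Integrable (fun x => (Sf P m c x).toReal * g x) m := by
    have := (Sf_int P m hc hcfin).bdd_mul hg.aestronglyMeasurable (c := |C|) (Eventually.of_forall fun y => hCC y)
    exact this.congr (Eventually.of_forall fun x => mul_comm _ _)
  have lhs : ∫ x, Tfun P m f x * g x ∂m
      = ∫ x, (Sf P m a x).toReal * g x ∂m - ∫ x, (Sf P m c x).toReal * g x ∂m := by
    rw [← integral_sub hSa hSc]
    refine integral_congr_ae (Eventually.of_forall fun x => ?_)
    simp only [Tfun]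
    ring
  -- measurability and boundedness of the P-average of g
  have hgp : Measurable (fun y => max (g y) 0) := hg.max measurable_const
  have hgm : Measurable (fun y => max (-g y) 0) := hg.neg.max measurable_const
  have hPgm : Measurable (fun x => ∫ y, g y ∂(P x)) := by
    have h1 : ∀ x, Integrable (fun y => max (g y) 0) (P x) := fun x =>
      ⟨hgp.aestronglyMeasurable, HasFiniteIntegral.of_bounded (C := |C|)
        (Eventually.of_forall fun y => by
          rw [Real.norm_eq_abs, abs_of_nonneg (le_max_right _ _)]
          exact max_le ((le_abs_self _).trans (hCC y)) (abs_nonneg C))⟩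
    have h2 : ∀ x, Integrable (fun y => max (-g y) 0) (P x) := fun x =>
      ⟨hgm.aestronglyMeasurable, HasFiniteIntegral.of_bounded (C := |C|)
        (Eventually.of_forall fun y => by
          rw [Real.norm_eq_abs, abs_of_nonneg (le_max_right _ _)]
          exact max_le ((neg_le_abs _).trans (hCC y)) (abs_nonneg C))⟩
    have heq : (fun x => ∫ y, g y ∂(P x))
        = fun x => (∫ y, max (g y) 0 ∂(P x)) - ∫ y, max (-g y) 0 ∂(P x) := by
      funext x
      rw [← integral_sub (h1 x) (h2 x)]
      refine integral_congr_ae (Eventually.of_forall fun y => ?_)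
      exact (max_zero_sub_max_neg_zero_eq_self (g y)).symm
    rw [heq]
    have hm1 : ∀ (h : E → ℝ), Measurable h → (∀ y, 0 ≤ h y) →
        Measurable (fun x => ∫ y, h y ∂(P x)) := by
      intro h hh hh0
      have : (fun x => ∫ y, h y ∂(P x))
          = fun x => (∫⁻ y, ENNReal.ofReal (h y) ∂(P x)).toReal := by
        funext x
        rw [integral_eq_lintegral_of_nonneg_ae (Eventually.of_forall hh0)
          hh.aestronglyMeasurable]
      rw [this]
      exact ((Measure.measurable_lintegral hh.ennreal_ofReal).comp
        P.measurable).ennreal_toReal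
    exact (hm1 _ hgp fun y => le_max_right _ _).sub (hm1 _ hgm fun y => le_max_right _ _)
  have hPgb : ∀ x, ‖∫ y, g y ∂(P x)‖ ≤ |C| := by
    intro x
    have := norm_integral_le_of_norm_le_const (μ := P x) (C := |C|)
      (Eventually.of_forall fun y => by rw [Real.norm_eq_abs]; exact hCC y) (f := g)
    simpa [measure_univ] using this
  have hia : Integrable (fun x => (a x).toReal * ∫ y, g y ∂(P x)) m := by
    have := (integrable_toReal_of_lintegral_ne_top ha hafin).bdd_mul
      hPgm.aestronglyMeasurable (c := |C|) (Eventually.of_forall hPgb)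
    exact this.congr (Eventually.of_forall fun x => mul_comm _ _)
  have hic : Integrable (fun x => (c x).toReal * ∫ y, g y ∂(P x)) m := by
    have := (integrable_toReal_of_lintegral_ne_top hc hcfin).bdd_mul
      hPgm.aestronglyMeasurable (c := |C|) (Eventually.of_forall hPgb)
    exact this.congr (Eventually.of_forall fun x => mul_comm _ _)
  rw [lhs, Sf_adj P m habs ha hafin hg hC, Sf_adj P m habs hc hcfin hg hC,
    ← integral_sub hia hic]
  refine integral_congr_ae (Eventually.of_forall fun x => ?_)
  dsimp only
  have h2 : (a x).toReal - (c x).toReal = f x := parts_sub (f x)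
  rw [← h2]
  ring



lemma Tfun_norm (habs : m.bind (⇑P) ≪ m) {f : E → ℝ} (hf : Integrable f m) :
    ∫⁻ x, ENNReal.ofReal ‖Tfun P m f x‖ ∂m ≤ ∫⁻ x, ENNReal.ofReal ‖f x‖ ∂m := by
  set a : E → ℝ≥0∞ := fun y => ENNReal.ofReal (f y) with hadef
  set c : E → ℝ≥0∞ := fun y => ENNReal.ofReal (-f y) with hcdef
  have ha : AEMeasurable a m := hf.aemeasurable.ennreal_ofReal
  have hc : AEMeasurable c m := hf.neg.aemeasurable.ennreal_ofReal
  have hafin := ofReal_lint_ne_top m hf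
  have hcfin := ofReal_lint_ne_top m hf.neg
  have step1 : ∫⁻ x, ENNReal.ofReal ‖Tfun P m f x‖ ∂m
      ≤ ∫⁻ x, Sf P m a x + Sf P m c x ∂m := by
    refine lintegral_mono fun x => ?_
    have h1 : ‖Tfun P m f x‖ ≤ (Sf P m a x).toReal + (Sf P m c x).toReal := by
      rw [Real.norm_eq_abs, Tfun]
      refine (abs_sub _ _).trans ?_
      rw [abs_of_nonneg ENNReal.toReal_nonneg, abs_of_nonneg ENNReal.toReal_nonneg]
    calc ENNReal.ofReal ‖Tfun P m f x‖
        ≤ ENNReal.ofReal ((Sf P m a x).toReal + (Sf P m c x).toReal) :=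
          ENNReal.ofReal_le_ofReal h1
      _ ≤ Sf P m a x + Sf P m c x := by
          rw [ENNReal.ofReal_add ENNReal.toReal_nonneg ENNReal.toReal_nonneg]
          exact add_le_add ENNReal.ofReal_toReal_le ENNReal.ofReal_toReal_le
  refine step1.trans ?_
  rw [lintegral_add_left (Sf_meas P m a), Sf_total P m habs ha hafin,
    Sf_total P m habs hc hcfin, ← lintegral_add_left' ha]
  refine lintegral_mono fun x => ?_
  have : a x + c x = ENNReal.ofReal |f x| := parts_add (f x)
  rw [this, Real.norm_eq_abs]

lemma key_real (r s : ℝ) :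
    ENNReal.ofReal (r + s) + (ENNReal.ofReal (-r) + ENNReal.ofReal (-s))
    = ENNReal.ofReal (-(r + s)) + (ENNReal.ofReal r + ENNReal.ofReal s) := by
  have hmax : ∀ x : ℝ, max x 0 = x + max (-x) 0 := by
    intro x
    rcases le_total 0 x with h | h
    · rw [max_eq_left h, max_eq_right (neg_nonpos.mpr h), add_zero]
    · rw [max_eq_right h, max_eq_left (neg_nonneg.mpr h)]
      ring
  rw [← ENNReal.toReal_eq_toReal_iff' (by finiteness) (by finiteness)]
  rw [ENNReal.toReal_add (by finiteness) (by finiteness),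
    ENNReal.toReal_add (by finiteness) (by finiteness),
    ENNReal.toReal_add (by finiteness) (by finiteness),
    ENNReal.toReal_add (by finiteness) (by finiteness)]
  simp only [ENNReal.toReal_ofReal']
  linarith [hmax r, hmax s, hmax (r + s)]

lemma muf_add {φ ψ : E → ℝ≥0∞} (hφ : Measurable φ) (hψ : Measurable ψ) :
    muf P m (fun x => φ x + ψ x) = muf P m φ + muf P m ψ := by
  ext s hs
  rw [Measure.add_apply, muf_apply P m (φ := fun x => φ x + ψ x) (hφ.add hψ).aemeasurable hs,
    muf_apply P m hφ.aemeasurable hs, muf_apply P m hψ.aemeasurable hs,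
    ← lintegral_add_left (f := fun x => φ x * P x s) (hφ.mul (P.measurable_coe hs))]
  congr 1
  funext x
  ring

lemma Tfun_add (habs : m.bind (⇑P) ≪ m) {f g : E → ℝ} (hfm : Measurable f)
    (hgm : Measurable g) (hf : Integrable f m) (hg : Integrable g m) :
    Tfun P m (f + g) =ᵐ[m] Tfun P m f + Tfun P m g := by
  set p : E → ℝ≥0∞ := fun y => ENNReal.ofReal ((f + g) y) with hpdef
  set q : E → ℝ≥0∞ := fun y => ENNReal.ofReal (-(f + g) y) with hqdef
  set a : E → ℝ≥0∞ := fun y => ENNReal.ofReal (f y) with hadef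
  set b : E → ℝ≥0∞ := fun y => ENNReal.ofReal (-f y) with hbdef
  set c : E → ℝ≥0∞ := fun y => ENNReal.ofReal (g y) with hcdef
  set d : E → ℝ≥0∞ := fun y => ENNReal.ofReal (-g y) with hddef
  have hpm : Measurable p := (hfm.add hgm).ennreal_ofReal
  have hqm : Measurable q := (hfm.add hgm).neg.ennreal_ofReal
  have ham : Measurable a := hfm.ennreal_ofReal
  have hbm : Measurable b := hfm.neg.ennreal_ofReal
  have hcm : Measurable c := hgm.ennreal_ofReal
  have hdm : Measurable d := hgm.neg.ennreal_ofReal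
  have hpf := ofReal_lint_ne_top m (hf.add hg)
  have hqf := ofReal_lint_ne_top m (hf.add hg).neg
  have haf := ofReal_lint_ne_top m hf
  have hbf := ofReal_lint_ne_top m hf.neg
  have hcf := ofReal_lint_ne_top m hg
  have hdf := ofReal_lint_ne_top m hg.neg
  -- measure identity
  have hmeas : muf P m (fun x => p x + (b x + d x))
      = muf P m (fun x => q x + (a x + c x)) := by
    congr 1
    funext x
    simp only [hpdef, hqdef, hadef, hbdef, hcdef, hddef, Pi.add_apply]
    exact key_real (f x) (g x)
  have hsum1 : muf P m (fun x => p x + (b x + d x))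
      = muf P m p + (muf P m b + muf P m d) := by
    rw [muf_add P m (ψ := fun x => b x + d x) hpm (hbm.add hdm), muf_add P m hbm hdm]
  have hsum2 : muf P m (fun x => q x + (a x + c x))
      = muf P m q + (muf P m a + muf P m c) := by
    rw [muf_add P m (ψ := fun x => a x + c x) hqm (ham.add hcm), muf_add P m ham hcm]
  have hmeq : muf P m p + (muf P m b + muf P m d)
      = muf P m q + (muf P m a + muf P m c) := by
    rw [← hsum1, ← hsum2, hmeas]
  -- finite measure instances
  have ip : IsFiniteMeasure (muf P m p) := muf_fin P m hpm.aemeasurable hpf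
  have iq : IsFiniteMeasure (muf P m q) := muf_fin P m hqm.aemeasurable hqf
  have ia : IsFiniteMeasure (muf P m a) := muf_fin P m ham.aemeasurable haf
  have ib : IsFiniteMeasure (muf P m b) := muf_fin P m hbm.aemeasurable hbf
  have ic : IsFiniteMeasure (muf P m c) := muf_fin P m hcm.aemeasurable hcf
  have id' : IsFiniteMeasure (muf P m d) := muf_fin P m hdm.aemeasurable hdf
  -- rnDeriv of both sides
  have h1 : (muf P m p + (muf P m b + muf P m d)).rnDeriv m
      =ᵐ[m] Sf P m p + (Sf P m b + Sf P m d) := by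
    refine (Measure.rnDeriv_add' _ _ _).trans ?_
    refine EventuallyEq.add (EventuallyEq.refl _ _) ?_
    exact Measure.rnDeriv_add' _ _ _
  have h2 : (muf P m q + (muf P m a + muf P m c)).rnDeriv m
      =ᵐ[m] Sf P m q + (Sf P m a + Sf P m c) := by
    refine (Measure.rnDeriv_add' _ _ _).trans ?_
    refine EventuallyEq.add (EventuallyEq.refl _ _) ?_
    exact Measure.rnDeriv_add' _ _ _
  have hkey : Sf P m p + (Sf P m b + Sf P m d)
      =ᵐ[m] Sf P m q + (Sf P m a + Sf P m c) := by
    refine h1.symm.trans ?_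
    rw [hmeq]
    exact h2
  filter_upwards [hkey, Sf_lt_top P m hpm.aemeasurable hpf,
    Sf_lt_top P m hqm.aemeasurable hqf, Sf_lt_top P m ham.aemeasurable haf,
    Sf_lt_top P m hbm.aemeasurable hbf, Sf_lt_top P m hcm.aemeasurable hcf,
    Sf_lt_top P m hdm.aemeasurable hdf]
    with x hx hp' hq' ha' hb' hc' hd'
  simp only [Pi.add_apply] at hx
  have hx' : (Sf P m p x).toReal + ((Sf P m b x).toReal + (Sf P m d x).toReal)
      = (Sf P m q x).toReal + ((Sf P m a x).toReal + (Sf P m c x).toReal) := by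
    have := congrArg ENNReal.toReal hx
    rwa [ENNReal.toReal_add hp'.ne (by finiteness),
      ENNReal.toReal_add hb'.ne hd'.ne,
      ENNReal.toReal_add hq'.ne (by finiteness),
      ENNReal.toReal_add ha'.ne hc'.ne] at this
  simp only [Tfun, Pi.add_apply]
  simp only [hpdef, hqdef, hadef, hbdef, hcdef, hddef, Pi.add_apply, Pi.neg_apply] at hx'
  linarith [hx']



lemma bind_smul (r : ℝ≥0∞) (μ : Measure E) :
    (r • μ).bind ⇑P = r • μ.bind ⇑P := by
  ext s hs
  rw [Measure.bind_apply hs P.measurable.aemeasurable, Measure.smul_apply, smul_eq_mul,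
    lintegral_smul_measure, Measure.bind_apply hs P.measurable.aemeasurable, smul_eq_mul]

lemma muf_smul (r : ℝ≥0∞) (hr : r ≠ ∞) (φ : E → ℝ≥0∞) :
    muf P m (fun x => r * φ x) = r • muf P m φ := by
  unfold muf
  rw [show (fun x => r * φ x) = r • φ from rfl, withDensity_smul' r φ hr, bind_smul]

lemma Sf_smul (r : ℝ≥0∞) (hr : r ≠ ∞) {φ : E → ℝ≥0∞} (hφ : AEMeasurable φ m)
    (hfin : ∫⁻ x, φ x ∂m ≠ ∞) :
    Sf P m (fun x => r * φ x) =ᵐ[m] fun x => r * Sf P m φ x := by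
  have hFin : IsFiniteMeasure (muf P m φ) := muf_fin P m hφ hfin
  unfold Sf
  rw [muf_smul P m r hr φ]
  filter_upwards [Measure.rnDeriv_smul_left_of_ne_top' (muf P m φ) m hr] with x hx
  rw [hx]
  simp [smul_eq_mul]

lemma Tfun_neg (f : E → ℝ) : Tfun P m (-f) = -Tfun P m f := by
  funext x
  simp only [Tfun, Pi.neg_apply, neg_neg]
  ring

lemma Tfun_smul_nonneg (habs : m.bind (⇑P) ≪ m) {c : ℝ} (hc : 0 ≤ c) {f : E → ℝ}
    (hfm : Measurable f) (hf : Integrable f m) :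
    Tfun P m (c • f) =ᵐ[m] c • Tfun P m f := by
  have ha : AEMeasurable (fun y => ENNReal.ofReal (f y)) m := hf.aemeasurable.ennreal_ofReal
  have hcp : AEMeasurable (fun y => ENNReal.ofReal (-f y)) m :=
    hf.neg.aemeasurable.ennreal_ofReal
  have haf := ofReal_lint_ne_top m hf
  have hbf := ofReal_lint_ne_top m hf.neg
  have e1 : (fun y => ENNReal.ofReal (c * f y))
      = fun y => ENNReal.ofReal c * ENNReal.ofReal (f y) := by
    funext y
    exact ENNReal.ofReal_mul hc
  have e2 : (fun y => ENNReal.ofReal (-(c * f y)))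
      = fun y => ENNReal.ofReal c * ENNReal.ofReal (-f y) := by
    funext y
    rw [← ENNReal.ofReal_mul hc, mul_neg]
  have s1 := Sf_smul P m (ENNReal.ofReal c) ENNReal.ofReal_ne_top ha haf
  have s2 := Sf_smul P m (ENNReal.ofReal c) ENNReal.ofReal_ne_top hcp hbf
  rw [← e1] at s1
  rw [← e2] at s2
  filter_upwards [s1, s2] with x h1 h2
  simp only [Tfun, Pi.smul_apply, smul_eq_mul]
  rw [h1, h2, ENNReal.toReal_mul, ENNReal.toReal_mul, ENNReal.toReal_ofReal hc]
  ring

lemma Tfun_smul (habs : m.bind (⇑P) ≪ m) (c : ℝ) {f : E → ℝ}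
    (hfm : Measurable f) (hf : Integrable f m) :
    Tfun P m (c • f) =ᵐ[m] c • Tfun P m f := by
  rcases le_total 0 c with hc | hc
  · exact Tfun_smul_nonneg P m habs hc hfm hf
  · have hd : 0 ≤ -c := neg_nonneg.mpr hc
    have e : c • f = -((-c) • f) := by
      funext y
      simp
    rw [e, Tfun_neg]
    filter_upwards [Tfun_smul_nonneg P m habs hd hfm hf] with x hx
    simp only [Pi.neg_apply, Pi.smul_apply, smul_eq_mul] at hx ⊢
    rw [hx]
    ring



lemma Tfun_coe_add (habs : m.bind (⇑P) ≪ m) (f g : Lp ℝ 1 m) :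
    Tfun P m ⇑(f + g) =ᵐ[m] Tfun P m ⇑f + Tfun P m ⇑g := by
  have hf : Integrable (⇑f) m := L1.integrable_coeFn f
  have hg : Integrable (⇑g) m := L1.integrable_coeFn g
  set f' := hf.1.mk ⇑f with hf'def
  set g' := hg.1.mk ⇑g with hg'def
  have heqf : ⇑f =ᵐ[m] f' := hf.1.ae_eq_mk
  have heqg : ⇑g =ᵐ[m] g' := hg.1.ae_eq_mk
  have h1 : Tfun P m ⇑(f + g) = Tfun P m (f' + g') :=
    Tfun_congr P m ((Lp.coeFn_add f g).trans (heqf.add heqg))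
  rw [h1, Tfun_congr P m heqf, Tfun_congr P m heqg]
  exact Tfun_add P m habs hf.1.stronglyMeasurable_mk.measurable
    hg.1.stronglyMeasurable_mk.measurable (hf.congr heqf) (hg.congr heqg)

lemma Tfun_coe_smul (habs : m.bind (⇑P) ≪ m) (c : ℝ) (f : Lp ℝ 1 m) :
    Tfun P m ⇑(c • f) =ᵐ[m] c • Tfun P m ⇑f := by
  have hf : Integrable (⇑f) m := L1.integrable_coeFn f
  set f' := hf.1.mk ⇑f with hf'def
  have heqf : ⇑f =ᵐ[m] f' := hf.1.ae_eq_mk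
  have h1 : Tfun P m ⇑(c • f) = Tfun P m (c • f') :=
    Tfun_congr P m ((Lp.coeFn_smul c f).trans (heqf.mono fun x hx => by
      simp only [Pi.smul_apply, hx]))
  rw [h1, Tfun_congr P m heqf]
  exact Tfun_smul P m habs c hf.1.stronglyMeasurable_mk.measurable (hf.congr heqf)

theorem stmt19' {E : Type*} [MeasurableSpace E] (P : Kernel E E) [IsMarkovKernel P]
    (m : Measure E) [SigmaFinite m] (habs : m.bind (⇑P) ≪ m) :
    ∃ T : Lp ℝ 1 m →L[ℝ] Lp ℝ 1 m, ‖T‖ ≤ 1 ∧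
      (∀ (f : Lp ℝ 1 m) (A : Set E), MeasurableSet A →
        (∫ y in A, (T f) y ∂m) = ∫ x, (f x) * (P x A).toReal ∂m) ∧
      (∀ (f : Lp ℝ 1 m) (g : E → ℝ), Measurable g → (∃ C, ∀ y, |g y| ≤ C) →
        (∫ x, (T f) x * g x ∂m) = ∫ x, (f x) * ∫ y, g y ∂(P x) ∂m) := by
  have hL1 : ∀ f : Lp ℝ 1 m, Integrable (⇑f) m := fun f => L1.integrable_coeFn f
  have hTi : ∀ f : Lp ℝ 1 m, Integrable (Tfun P m ⇑f) m := fun f => Tfun_int P m (hL1 f)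
  let T0 : Lp ℝ 1 m →ₗ[ℝ] Lp ℝ 1 m :=
    { toFun := fun f => (hTi f).toL1 _
      map_add' := by
        intro f g
        rw [← Integrable.toL1_add _ _ (hTi f) (hTi g)]
        rw [Integrable.toL1_eq_toL1_iff]
        exact Tfun_coe_add P m habs f g
      map_smul' := by
        intro c f
        simp only [RingHom.id_apply]
        rw [← Integrable.toL1_smul _ (hTi f) c]
        rw [Integrable.toL1_eq_toL1_iff]
        exact Tfun_coe_smul P m habs c f }
  have hbound : ∀ f : Lp ℝ 1 m, ‖T0 f‖ ≤ 1 * ‖f‖ := by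
    intro f
    rw [one_mul]
    have h1 : ‖T0 f‖ = (∫⁻ x, ENNReal.ofReal ‖Tfun P m (⇑f) x‖ ∂m).toReal :=
      Integrable.norm_toL1_eq_lintegral_norm (Tfun P m ⇑f) (hTi f)
    have h2 : ‖f‖ = (∫⁻ x, ENNReal.ofReal ‖(⇑f) x‖ ∂m).toReal := by
      conv_lhs => rw [← Integrable.toL1_coeFn f (hL1 f)]
      exact Integrable.norm_toL1_eq_lintegral_norm (⇑f) (hL1 f)
    rw [h1, h2]
    have hfin : ∫⁻ x, ENNReal.ofReal ‖(⇑f) x‖ ∂m ≠ ∞ := by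
      have : ∀ x, ENNReal.ofReal ‖(⇑f) x‖ = (‖(⇑f) x‖₊ : ℝ≥0∞) := fun x =>
        ofReal_norm _
      rw [lintegral_congr this]
      exact (hL1 f).2.ne
    exact ENNReal.toReal_mono hfin (Tfun_norm P m habs (hL1 f))
  let T : Lp ℝ 1 m →L[ℝ] Lp ℝ 1 m := T0.mkContinuous 1 hbound
  have hTapp : ∀ f : Lp ℝ 1 m, ⇑(T f) =ᵐ[m] Tfun P m ⇑f := fun f =>
    Integrable.coeFn_toL1 (hTi f)
  have prop2 : ∀ (f : Lp ℝ 1 m) (g : E → ℝ), Measurable g → (∃ C, ∀ y, |g y| ≤ C) →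
      (∫ x, (T f) x * g x ∂m) = ∫ x, (f x) * ∫ y, g y ∂(P x) ∂m := by
    intro f g hg ⟨C, hC⟩
    have h1 : ∫ x, (T f) x * g x ∂m = ∫ x, Tfun P m (⇑f) x * g x ∂m := by
      refine integral_congr_ae ?_
      filter_upwards [hTapp f] with x hx
      rw [hx]
    rw [h1]
    exact Tfun_adj P m habs (hL1 f) hg hC
  refine ⟨T, ?_, ?_, prop2⟩
  · exact LinearMap.mkContinuous_norm_le T0 zero_le_one hbound
  · intro f A hA
    have hg : Measurable (A.indicator fun _ => (1 : ℝ)) :=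
      measurable_const.indicator hA
    have hgb : ∃ C, ∀ y, |A.indicator (fun _ => (1:ℝ)) y| ≤ C := by
      refine ⟨1, fun y => ?_⟩
      by_cases hy : y ∈ A <;> simp [Set.indicator_of_mem, Set.indicator_of_notMem, hy]
    have h2 := prop2 f (A.indicator fun _ => (1:ℝ)) hg hgb
    have hl : ∫ x, (T f) x * A.indicator (fun _ => (1:ℝ)) x ∂m
        = ∫ y in A, (T f) y ∂m := by
      rw [← integral_indicator hA]
      refine integral_congr_ae (Eventually.of_forall fun x => ?_)
      by_cases hx : x ∈ A <;>
        simp [Set.indicator_of_mem, Set.indicator_of_notMem, hx]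
    have hr : ∀ x, ∫ y, A.indicator (fun _ => (1:ℝ)) y ∂(P x) = (P x A).toReal := by
      intro x
      rw [integral_indicator_const (1 : ℝ) hA]
      simp
      rfl
    rw [hl] at h2
    rw [h2]
    refine integral_congr_ae (Eventually.of_forall fun x => ?_)
    dsimp only
    rw [hr x]

end Stmt19Aux


/-- if `m` is σ-finite and `mP ≪ m`, the map sending `dκ/dm` to `d(κP)/dm`
is a well-defined linear contraction `T` on `L¹(m)` — characterized by
`∫_A T f dm = ∫ f(x) P(x,A) dm(x)` — whose adjoint on `L^∞(m)` is the averaging operator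
`g ↦ (x ↦ ∫ g dP_x)`. -/
theorem stmt19 {E : Type*} [MeasurableSpace E] (P : Kernel E E) [IsMarkovKernel P]
    (m : Measure E) [SigmaFinite m] (habs : m.bind (⇑P) ≪ m) :
    ∃ T : Lp ℝ 1 m →L[ℝ] Lp ℝ 1 m, ‖T‖ ≤ 1 ∧
      (∀ (f : Lp ℝ 1 m) (A : Set E), MeasurableSet A →
        (∫ y in A, (T f) y ∂m) = ∫ x, (f x) * (P x A).toReal ∂m) ∧
      (∀ (f : Lp ℝ 1 m) (g : E → ℝ), Measurable g → (∃ C, ∀ y, |g y| ≤ C) →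
        (∫ x, (T f) x * g x ∂m) = ∫ x, (f x) * ∫ y, g y ∂(P x) ∂m) := by
  exact stmt19' P m habs
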